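/- arXiv:1702.01523 — 3 statements merged into one kernel-verified Lean document; each statement's English description precedes it below -/
import Mathlib

section
/- Let A be a 3×3 unitary matrix with all entries nonzero and |a_{22}| ≠ 1. Suppose λ ∈ ℂ with |λ| = 1 satisfies λ = -(a_{12}a_{23} - a_{13}a_{22})/a_{13} = -(a_{21}a_{32} - a_{22}a_{31})/a_{31}. Set ã₁ = a_{11} - a_{13}a_{21}/a_{23} and ã₂ = a_{33} - a_{23}a_{31}/a_{21}, and for φ₁, φ₃ ∈ ℂ define Ψ(x) = ((ã₁⁻¹λ)^x φ₁, -(a_{13}/(a_{12}a_{23}))·(a_{21}(ã₁⁻¹λ)^x φ₁ + a_{23}(ã₂λ⁻¹)^x φ₃), (ã₂λ⁻¹)^x φ₃) for x ∈ ℤ. Then Ψ satisfies the eigenvalue equation U_A Ψ = λΨ. -/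
open Complex Matrix Finset

noncomputable def walk (A : Matrix (Fin 3) (Fin 3) ℂ) (Ψ : ℤ → Fin 3 → ℂ) : ℤ → Fin 3 → ℂ :=
  fun x => ![∑ j, A 0 j * Ψ (x + 1) j, ∑ j, A 1 j * Ψ x j, ∑ j, A 2 j * Ψ (x - 1) j]

theorem type1_eigenfunction (A : Matrix (Fin 3) (Fin 3) ℂ)
    (hA : A ∈ Matrix.unitaryGroup (Fin 3) ℂ)
    (hne : ∀ i j, A i j ≠ 0) (h22 : ‖A 1 1‖ ≠ 1)
    (lam : ℂ) (habs : ‖lam‖ = 1)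
    (h1 : lam = -(A 0 1 * A 1 2 - A 0 2 * A 1 1) / A 0 2)
    (h2 : lam = -(A 1 0 * A 2 1 - A 1 1 * A 2 0) / A 2 0)
    (φ₁ φ₃ : ℂ)
    (a1 a2 : ℂ) (ha1 : a1 = A 0 0 - A 0 2 * A 1 0 / A 1 2)
    (ha2 : a2 = A 2 2 - A 1 2 * A 2 0 / A 1 0)
    (Ψ : ℤ → Fin 3 → ℂ)
    (hΨ : Ψ = fun x => ![(a1⁻¹ * lam) ^ x * φ₁,
      -(A 0 2 / (A 0 1 * A 1 2)) * (A 1 0 * (a1⁻¹ * lam) ^ x * φ₁ + A 1 2 * (a2 * lam⁻¹) ^ x * φ₃),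
      (a2 * lam⁻¹) ^ x * φ₃]) :
    walk A Ψ = fun x i => lam * Ψ x i := by
  have hlam : lam ≠ 0 := by
    intro h; rw [h] at habs; simp at habs
  have hdet : A.det ≠ 0 := by
    have h1' : star A * A = 1 := hA.1
    intro h
    have := congrArg Matrix.det h1'
    rw [Matrix.det_mul, h, mul_zero] at this
    simp at this
  have hadj : Matrix.adjugate A = A.det • star A := by
    have hl : star A * A = 1 := hA.1
    calc adjugate A = (star A * A) * adjugate A := by rw [hl, one_mul]
      _ = star A * (A * adjugate A) := by rw [mul_assoc]
      _ = star A * (A.det • 1) := by rw [Matrix.mul_adjugate]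
      _ = A.det • star A := by rw [Matrix.mul_smul, mul_one]
  have hadj12 := congrFun (congrFun hadj 1) 2
  have hadj10 := congrFun (congrFun hadj 1) 0
  rw [Matrix.adjugate_fin_three] at hadj12 hadj10
  simp [Matrix.smul_apply, Matrix.star_apply] at hadj12 hadj10
  -- hadj12 : -(A 0 0 * A 1 2) + A 0 2 * A 1 0 = A.det * conj (A 2 1)
  -- hadj10 : -(A 1 0 * A 2 2) + A 1 2 * A 2 0 = A.det * conj (A 0 1)
  have hc21 : (starRingEnd ℂ) (A 2 1) ≠ 0 := by
    simpa using hne 2 1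
  have hc01 : (starRingEnd ℂ) (A 0 1) ≠ 0 := by
    simpa using hne 0 1
  have ha1ne : a1 ≠ 0 := by
    rw [ha1]
    intro h
    apply mul_ne_zero hdet hc21
    rw [← hadj12]
    have h12 := hne 1 2
    field_simp at h
    linear_combination -h
  have ha2ne : a2 ≠ 0 := by
    rw [ha2]
    intro h
    apply mul_ne_zero hdet hc01
    rw [← hadj10]
    have h10 := hne 1 0
    field_simp at h
    linear_combination -h
  have e1 : lam * A 0 2 = -(A 0 1 * A 1 2 - A 0 2 * A 1 1) := by
    rw [h1]; field_simp [hne 0 2]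
  have e2 : lam * A 2 0 = -(A 1 0 * A 2 1 - A 1 1 * A 2 0) := by
    rw [h2]; field_simp [hne 2 0]
  have key : A 0 1 * A 1 2 * A 2 0 = A 0 2 * A 1 0 * A 2 1 := by
    have := congrArg (· * A 2 0) e1
    linear_combination A 2 0 * e1 - A 0 2 * e2
  have f1 : a1 * A 1 2 = A 0 0 * A 1 2 - A 0 2 * A 1 0 := by
    rw [ha1]; field_simp [hne 1 2]
  have f2 : a2 * A 1 0 = A 2 2 * A 1 0 - A 1 2 * A 2 0 := by
    rw [ha2]; field_simp [hne 1 0]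
  have g2 : A 0 1 * A 2 2 - A 0 2 * A 2 1 = A 0 1 * a2 :=
    mul_left_cancel₀ (hne 1 0) (by linear_combination (-(A 0 1)) * f2 + key)
  have hα : a1⁻¹ * lam ≠ 0 := mul_ne_zero (inv_ne_zero ha1ne) hlam
  have hβ : a2 * lam⁻¹ ≠ 0 := mul_ne_zero ha2ne (inv_ne_zero hlam)
  funext x i
  subst hΨ
  fin_cases i <;>
    simp only [walk, Fin.sum_univ_three, Fin.zero_eta, Fin.mk_one, Fin.reduceFinMk,
      Matrix.cons_val_zero, Matrix.cons_val_one,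
      Matrix.head_cons, Matrix.cons_val_two, Matrix.tail_cons, Fin.isValue,
      zpow_add₀ hα, zpow_add₀ hβ, zpow_sub₀ hα, zpow_sub₀ hβ, zpow_one]
  all_goals (
    set P := (a1⁻¹ * lam) ^ x with hP
    set Q := (a2 * lam⁻¹) ^ x with hQ
    clear hP hQ h1 h2 ha1 ha2 habs h22 hA hadj hadj12 hadj10)
  · field_simp [hne 0 1, hne 0 2, hne 1 0, hne 1 2, hne 2 0, hne 2 1, hlam, ha1ne, ha2ne]
    linear_combination (-(P * lam ^ 2 * φ₁)) * f1
  · field_simp [hne 0 1, hne 0 2, hne 1 0, hne 1 2, hne 2 0, hne 2 1, hlam, ha1ne, ha2ne]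
    linear_combination (A 1 0 * P * φ₁ + A 1 2 * Q * φ₃) * e1
  · field_simp [hne 0 1, hne 0 2, hne 1 0, hne 1 2, hne 2 0, hne 2 1, hlam, ha1ne, ha2ne]
    linear_combination (P * a1 * φ₁ * a2) * key + (lam ^ 2 * A 1 2 * Q * φ₃) * g2
end

section
/- Let ω = e^{2πi/3} and A_F = (1/√3)[[1,1,1],[1,ω,ω²],[1,ω²,ω]] be the 3×3 Fourier matrix. For any φ₁, φ₃ ∈ ℂ, the function Ψ(x) = (ω^x φ₁, -(ω^{x+1}φ₁ + φ₃), φ₃) for x ∈ ℤ satisfies U_{A_F}Ψ = iΨ. -/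
open Complex Matrix Finset

noncomputable def ω : ℂ := Complex.exp (2 * Real.pi * Complex.I / 3)

noncomputable def fourierMatrix : Matrix (Fin 3) (Fin 3) ℂ :=
  (1 / Real.sqrt 3 : ℂ) • !![1, 1, 1; 1, ω, ω ^ 2; 1, ω ^ 2, ω]

lemma hω : ω = -1/2 + (Real.sqrt 3 / 2 : ℝ) * Complex.I := by
  have h : (2 * (Real.pi:ℂ) * Complex.I / 3) = ((2 * Real.pi / 3 : ℝ) : ℂ) * Complex.I := by
    push_cast; ring
  have h2 : (2 * Real.pi / 3 : ℝ) = Real.pi - Real.pi / 3 := by ring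
  rw [ω, h, Complex.exp_mul_I, h2, ← Complex.ofReal_cos, ← Complex.ofReal_sin, Real.cos_pi_sub,
    Real.sin_pi_sub, Real.cos_pi_div_three, Real.sin_pi_div_three]
  push_cast; ring

lemma hs3 : ((Real.sqrt 3 : ℝ) : ℂ)^2 = 3 := by
  rw [← Complex.ofReal_pow, Real.sq_sqrt (by norm_num)]; norm_num

lemma hsI : ((Real.sqrt 3 : ℝ) : ℂ) * Complex.I = 2 * ω + 1 := by
  rw [hω]; push_cast; ring

lemma hωsum : ω^2 + ω + 1 = 0 := by
  rw [hω]
  push_cast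
  linear_combination (Complex.I^2/4) * hs3 + (3/4 : ℂ) * Complex.I_sq

lemma hωne : ω ≠ 0 := Complex.exp_ne_zero _

lemma hsne : ((Real.sqrt 3 : ℝ) : ℂ) ≠ 0 := by
  simp [Real.sqrt_eq_zero']

theorem fourier_type1_eigenfunction (φ₁ φ₃ : ℂ)
    (Ψ : ℤ → Fin 3 → ℂ)
    (hΨ : Ψ = fun x => ![ω ^ x * φ₁, -(ω ^ (x + 1) * φ₁ + φ₃), φ₃]) :
    walk fourierMatrix Ψ = fun x i => Complex.I * Ψ x i := by
  subst hΨ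
  funext x i
  have hx1 : ω ^ (x + 1) = ω ^ x * ω := zpow_add_one₀ hωne x
  have hx2 : ω ^ (x + 1 + 1) = ω ^ x * ω * ω := by rw [zpow_add_one₀ hωne, hx1]
  have hinv : ω⁻¹ = ω ^ 2 := by
    refine inv_eq_of_mul_eq_one_right ?_
    linear_combination (ω - 1) * hωsum
  have hx3 : ω ^ (x - 1) = ω ^ x * ω ^ 2 := by rw [zpow_sub_one₀ hωne, hinv]
  have hx4 : ω ^ (x - 1 + 1) = ω ^ x := by rw [zpow_add_one₀ hωne, hx3]; linear_combination (ω^x * (ω - 1)) * hωsum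
  fin_cases i <;>
    simp [walk, fourierMatrix, Fin.sum_univ_three, hx1, hx2, hx3, hx4] <;>
    field_simp [hsne]
  · linear_combination (-(ω^x * φ₁)) * hωsum + (-(ω^x * φ₁)) * hsI
  · linear_combination (ω^x * φ₁ + φ₃) * hωsum + (φ₃ + ω^x * ω * φ₁) * hsI
  · linear_combination (-φ₃) * hωsum + (-φ₃) * hsI
end

section
/- Let A be a 3×3 unitary matrix with all entries a_{ij} nonzero and |a_{22}| ≠ 1. Suppose λ ∈ ℂ with |λ| = 1 satisfies λ = (a_{11}a_{22} - a_{12}a_{21})/a_{11} = (a_{22}a_{33} - a_{23}a_{32})/a_{33}, and set ã₁ = a_{13} - a_{11}a_{23}/a_{21}, ã₂ = a_{31} - a_{21}a_{33}/a_{23}, and assume λ² = ã₁ã₂. Let φ : ℤ → ℂ be any function not identically zero. Then Ψ(x) = (φ(x), -(a_{11}/(a_{12}a_{21}))·(a_{21}φ(x) + a_{23}(ã₁⁻¹λ)φ(x-1)), (ã₁⁻¹λ)φ(x-1)) satisfies U_A Ψ = λΨ. -/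
open Complex Matrix Finset

theorem type2_eigenfunction (A : Matrix (Fin 3) (Fin 3) ℂ)
    (hA : A ∈ Matrix.unitaryGroup (Fin 3) ℂ)
    (hne : ∀ i j, A i j ≠ 0) (h22 : ‖A 1 1‖ ≠ 1)
    (lam : ℂ) (habs : ‖lam‖ = 1)
    (h1 : lam = (A 0 0 * A 1 1 - A 0 1 * A 1 0) / A 0 0)
    (h2 : lam = (A 1 1 * A 2 2 - A 1 2 * A 2 1) / A 2 2)
    (a1 a2 : ℂ) (ha1 : a1 = A 0 2 - A 0 0 * A 1 2 / A 1 0)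
    (ha2 : a2 = A 2 0 - A 1 0 * A 2 2 / A 1 2)
    (hsq : lam ^ 2 = a1 * a2)
    (φ : ℤ → ℂ) (hφ : ∃ x, φ x ≠ 0)
    (Ψ : ℤ → Fin 3 → ℂ)
    (hΨ : Ψ = fun x => ![φ x,
      -(A 0 0 / (A 0 1 * A 1 0)) * (A 1 0 * φ x + A 1 2 * (a1⁻¹ * lam) * φ (x - 1)),
      (a1⁻¹ * lam) * φ (x - 1)]) :
    walk A Ψ = fun x i => lam * Ψ x i := by
  have hlam : lam ≠ 0 := by
    intro h; rw [h] at habs; simp at habs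
  have ha1ne : a1 ≠ 0 := by
    intro h; rw [h, zero_mul] at hsq
    exact hlam (pow_eq_zero_iff (two_ne_zero) |>.mp hsq)
  rw [eq_div_iff (hne 0 0)] at h1
  rw [eq_div_iff (hne 2 2)] at h2
  have hA1 : a1 * A 1 0 = A 0 2 * A 1 0 - A 0 0 * A 1 2 := by
    rw [ha1]; field_simp [hne 1 0]
  have hA2 : a2 * A 1 2 = A 2 0 * A 1 2 - A 1 0 * A 2 2 := by
    rw [ha2]; field_simp [hne 1 2]
  have hkey : A 0 0 * A 1 2 * A 2 1 = A 0 1 * A 1 0 * A 2 2 := by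
    linear_combination A 0 0 * h2 - A 2 2 * h1
  have hE : A 0 1 * a2 = A 0 1 * A 2 0 - A 0 0 * A 2 1 :=
    mul_left_cancel₀ (hne 1 2) (by linear_combination A 0 1 * hA2 + hkey)
  funext x i
  fin_cases i
  · simp only [walk, hΨ, Fin.sum_univ_three, Matrix.cons_val_zero, Matrix.cons_val_one,
      Matrix.head_cons, Matrix.cons_val_two, Matrix.tail_cons, add_sub_cancel_right, Fin.isValue, Fin.zero_eta, Fin.mk_one, Fin.reduceFinMk]
    field_simp [hne 0 1, hne 1 0, ha1ne]
    linear_combination (-(lam * φ x)) * hA1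
  · simp only [walk, hΨ, Fin.sum_univ_three, Matrix.cons_val_zero, Matrix.cons_val_one,
      Matrix.head_cons, Matrix.cons_val_two, Matrix.tail_cons, Fin.isValue, Fin.zero_eta, Fin.mk_one, Fin.reduceFinMk]
    field_simp [hne 0 1, hne 1 0, ha1ne]
    linear_combination (A 1 0 * φ x * a1 + A 1 2 * lam * φ (x - 1)) * h1
  · simp only [walk, hΨ, Fin.sum_univ_three, Matrix.cons_val_zero, Matrix.cons_val_one,
      Matrix.head_cons, Matrix.cons_val_two, Matrix.tail_cons, Fin.isValue, Fin.zero_eta, Fin.mk_one, Fin.reduceFinMk]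
    field_simp [hne 0 1, hne 1 0, ha1ne]
    linear_combination (-(lam * φ (x - 1 - 1))) * hkey +
      (-(φ (x - 1) * A 0 1 * A 1 0)) * hsq + (-(a1 * φ (x - 1) * A 1 0)) * hE
end
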